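/- For all positive integers p and q with p ≥ q, the minimum covering radius over all relabelings of the (p,q)-type group satisfies L_min(G_{p,q}) ≥ p − ⌈√(2p·ln(p) + 2p)⌉. -/

import Mathlib

open Equiv

/-- The ℓ∞-distance between two permutations of `Fin n`. -/
noncomputable def linfDist {n : ℕ} (f g : Perm (Fin n)) : ℕ :=
  Finset.univ.sup fun i : Fin n => (((f i).val : ℤ) - ((g i).val : ℤ)).natAbs

/-- The distance from a permutation to a code `C`. -/
noncomputable def distToCode {n : ℕ} (f : Perm (Fin n)) (C : Set (Perm (Fin n))) : ℕ :=
  sInf (linfDist f '' C)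

/-- The covering radius of a code `C ⊆ Sₙ`. -/
noncomputable def coveringRadius {n : ℕ} (C : Set (Perm (Fin n))) : ℕ :=
  sSup (Set.range fun f : Perm (Fin n) => distToCode f C)

/-- The relabeling `C^π = π C π⁻¹`. -/
def conjCode {n : ℕ} (π : Perm (Fin n)) (C : Set (Perm (Fin n))) : Set (Perm (Fin n)) :=
  (fun g => π * g * π⁻¹) '' C

/-- Maximum covering radius over all relabelings. -/
noncomputable def Lmax {n : ℕ} (C : Set (Perm (Fin n))) : ℕ :=
  sSup (Set.range fun π : Perm (Fin n) => coveringRadius (conjCode π C))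

/-- Minimum covering radius over all relabelings. -/
noncomputable def Lmin {n : ℕ} (C : Set (Perm (Fin n))) : ℕ :=
  sInf (Set.range fun π : Perm (Fin n) => coveringRadius (conjCode π C))

/-- The `(p,q)`-type group `G_{p,q} = ⟨(1,…,p), (p+1,…,p+q)⟩ ⊆ S_{p+q}`
(using `0`-indexed `Fin (p+q)`). -/
def Gpq (p q : ℕ) : Subgroup (Perm (Fin (p + q))) :=
  Subgroup.closure
    { ((List.finRange p).map (Fin.castLE (Nat.le_add_right p q))).formPerm,
      ((List.finRange q).map (Fin.natAdd p)).formPerm }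

/-- The transitive cyclic group `Gₙ = ⟨(1,2,…,n)⟩`. -/
def Gcyc (n : ℕ) : Subgroup (Perm (Fin n)) := Subgroup.closure {finRotate n}

/-- The natural dihedral group
`Dₙ = ⟨(1,2,…,n), ∏_{i=1}^{⌊n/2⌋} (i, n-i)⟩` (using `0`-indexed `Fin n`). -/
def Dn (n : ℕ) : Subgroup (Perm (Fin n)) :=
  Subgroup.closure
    { finRotate n,
      (((List.finRange (n / 2)).map fun i =>
        Equiv.swap (⟨i.val, by have := i.isLt; omega⟩ : Fin n)
          (⟨n - 2 - i.val, by have := i.isLt; omega⟩ : Fin n)).prod) }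

/-! ### Auxiliary results for the proof of `stmt_9` -/

section Counting

lemma sum_Icc_id_real (s : ℕ) : ∑ k ∈ Finset.Icc 1 s, (k : ℝ) = s * (s + 1) / 2 := by
  induction s with
  | zero => simp
  | succ n ih =>
    rw [Finset.sum_Icc_succ_top (by omega), ih]; push_cast; ring

lemma count_ineq_real (p s : ℕ) (hp : 2 ≤ p) (hs : s < p)
    (hge : 2 * (p : ℝ) * Real.log p + 2 * p ≤ (s : ℝ) ^ 2) :
    (p : ℝ) * ∏ k ∈ Finset.Icc 1 s, ((p : ℝ) - k) < (p : ℝ) ^ s := by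
  have hp0 : (0 : ℝ) < p := by positivity
  have h1 : ∏ k ∈ Finset.Icc 1 s, ((p : ℝ) - k) ≤
      ∏ k ∈ Finset.Icc 1 s, ((p : ℝ) * Real.exp (-(k / p))) := by
    apply Finset.prod_le_prod
    · intro k hk
      simp only [Finset.mem_Icc] at hk
      have : (k : ℝ) ≤ p := by exact_mod_cast (le_of_lt (lt_of_le_of_lt hk.2 hs))
      linarith
    · intro k hk
      have h2 : (1 : ℝ) - k / p ≤ Real.exp (-(k / p)) := by
        have := Real.add_one_le_exp (-(k / p : ℝ)); linarith
      have : (p : ℝ) - k = p * (1 - k / p) := by field_simp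
      rw [this]
      exact mul_le_mul_of_nonneg_left h2 (le_of_lt hp0)
  have h3 : ∏ k ∈ Finset.Icc 1 s, ((p : ℝ) * Real.exp (-(k / p))) =
      (p : ℝ) ^ s * Real.exp (-(∑ k ∈ Finset.Icc 1 s, (k : ℝ)) / p) := by
    rw [Finset.prod_mul_distrib, Finset.prod_const, Nat.card_Icc]
    simp only [Nat.add_sub_cancel]
    rw [← Real.exp_sum]
    congr 1
    rw [← Finset.sum_neg_distrib, Finset.sum_div]
    simp [neg_div]
  have h4 : Real.exp (-(∑ k ∈ Finset.Icc 1 s, (k : ℝ)) / p) ≤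
      Real.exp (-(Real.log p + 1)) := by
    apply Real.exp_le_exp.mpr
    rw [sum_Icc_id_real, neg_div, neg_le_neg_iff, le_div_iff₀ hp0]
    have hss : (s : ℝ) ^ 2 ≤ (s : ℝ) * (s + 1) := by
      nlinarith [Nat.cast_nonneg (α := ℝ) s]
    nlinarith
  have h5 : Real.exp (-(Real.log p + 1)) = 1 / (Real.exp 1 * p) := by
    rw [neg_add, Real.exp_add, Real.exp_neg, Real.exp_neg, Real.exp_log hp0]
    field_simp
  have h6 : (p : ℝ) * ∏ k ∈ Finset.Icc 1 s, ((p : ℝ) - k) ≤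
      (p : ℝ) * ((p : ℝ) ^ s * (1 / (Real.exp 1 * p))) := by
    rw [← h5]
    have := h1.trans (le_of_eq h3)
    have h7 : (p : ℝ) ^ s * Real.exp (-(∑ k ∈ Finset.Icc 1 s, (k : ℝ)) / p) ≤
        (p : ℝ) ^ s * Real.exp (-(Real.log p + 1)) :=
      mul_le_mul_of_nonneg_left h4 (by positivity)
    exact mul_le_mul_of_nonneg_left (this.trans h7) (le_of_lt hp0)
  have he : (1 : ℝ) < Real.exp 1 := by
    have := Real.add_one_le_exp (1 : ℝ); linarith
  calc (p : ℝ) * ∏ k ∈ Finset.Icc 1 s, ((p : ℝ) - k)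
      ≤ (p : ℝ) * ((p : ℝ) ^ s * (1 / (Real.exp 1 * p))) := h6
    _ = (p : ℝ) ^ s / Real.exp 1 := by field_simp
    _ < (p : ℝ) ^ s := by
        rw [div_lt_iff₀ (by positivity)]
        nlinarith [pow_pos hp0 s]

lemma count_ineq_nat (p s : ℕ) (hp : 2 ≤ p) (hs : s < p)
    (hge : 2 * (p : ℝ) * Real.log p + 2 * p ≤ (s : ℝ) ^ 2) :
    p * ∏ k ∈ Finset.Icc 1 s, (p - k) < p ^ s := by
  have h := count_ineq_real p s hp hs hge
  have hcast : ((p * ∏ k ∈ Finset.Icc 1 s, (p - k) : ℕ) : ℝ) =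
      (p : ℝ) * ∏ k ∈ Finset.Icc 1 s, ((p : ℝ) - k) := by
    push_cast
    congr 1
    apply Finset.prod_congr rfl
    intro k hk
    simp only [Finset.mem_Icc] at hk
    have : k ≤ p := le_of_lt (lt_of_le_of_lt hk.2 hs)
    push_cast [Nat.cast_sub this]
    ring
  have : ((p * ∏ k ∈ Finset.Icc 1 s, (p - k) : ℕ) : ℝ) < ((p ^ s : ℕ) : ℝ) := by
    rw [hcast]; push_cast; exact h
  exact_mod_cast this

lemma card_filter_val_lt (s k : ℕ) (hk : k ≤ s) :
    (Finset.univ.filter fun t : Fin s => t.val < k).card = k := by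
  apply Finset.card_eq_of_bijective (fun i h => (⟨i, lt_of_lt_of_le h hk⟩ : Fin s))
  · intro a ha
    simp only [Finset.mem_filter, Finset.mem_univ, true_and] at ha
    exact ⟨a.val, ha, rfl⟩
  · intro i h
    simp only [Finset.mem_filter, Finset.mem_univ, true_and]
    exact h
  · intro i j hi hj hij
    simpa using congrArg Fin.val hij

lemma exists_covering (p s : ℕ) (hp : 2 ≤ p) (hs0 : 0 < s) (hs : s ≤ p)
    (hcnt : p * ∏ k ∈ Finset.Icc 1 s, (p - k) < p ^ s)
    (u : Fin s → ZMod p) (hu : Function.Injective u) :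
    ∃ m : Fin s → ZMod p, ∀ i : ZMod p, ∃ v t : Fin s,
      t.val + v.val < s ∧ m v + i = u t := by
  haveI : NeZero p := ⟨by omega⟩
  by_contra hno
  push_neg at hno
  set P : ZMod p → (Fin s → ZMod p) → Prop :=
    fun i m => ∀ v : Fin s, ∀ t : Fin s, t.val + v.val < s → m v + i ≠ u t with hP
  have hbad : ∀ m : Fin s → ZMod p, ∃ i, P i m := hno
  have hinj : Function.Injective
      (fun m : Fin s → ZMod p =>
        (⟨Classical.choose (hbad m), ⟨m, Classical.choose_spec (hbad m)⟩⟩ :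
          Σ i : ZMod p, {m' : Fin s → ZMod p // P i m'})) := by
    intro m1 m2 h
    have := congrArg (fun x : Σ i : ZMod p, {m' : Fin s → ZMod p // P i m'} =>
      (x.2 : Fin s → ZMod p)) h
    exact this
  have hcard := Fintype.card_le_of_injective _ hinj
  rw [Fintype.card_sigma] at hcard
  have hcard1 : Fintype.card (Fin s → ZMod p) = p ^ s := by
    rw [Fintype.card_fun, ZMod.card, Fintype.card_fin]
  have hcard2 : ∀ i : ZMod p,
      Fintype.card {m' : Fin s → ZMod p // P i m'} = ∏ v : Fin s, (p - (s - v.val)) := by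
    intro i
    have he : {m' : Fin s → ZMod p // P i m'} ≃
        ∀ v : Fin s, {x : ZMod p // ∀ t : Fin s, t.val + v.val < s → x + i ≠ u t} :=
      Equiv.subtypePiEquivPi (β := fun _ : Fin s => ZMod p)
        (p := fun (v : Fin s) (x : ZMod p) => ∀ t : Fin s, t.val + v.val < s → x + i ≠ u t)
    rw [Fintype.card_congr he, Fintype.card_pi]
    apply Finset.prod_congr rfl
    intro v _
    have hBdef : ∀ x : ZMod p,
        (∀ t : Fin s, t.val + v.val < s → x + i ≠ u t) ↔
        x ∉ ((Finset.univ.filter fun t : Fin s => t.val + v.val < s).image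
              fun t => u t - i) := by
      intro x
      simp only [Finset.mem_image, Finset.mem_filter, Finset.mem_univ, true_and, not_exists]
      constructor
      · rintro h t ⟨ht, rfl⟩
        exact h t ht (by ring)
      · intro h t ht heq
        exact h t ⟨ht, by rw [← heq]; ring⟩
    have hBcard : ((Finset.univ.filter fun t : Fin s => t.val + v.val < s).image
        fun t => u t - i).card = s - v.val := by
      rw [Finset.card_image_of_injective _ (fun t1 t2 h => hu (by
        have : u t1 - i + i = u t2 - i + i := by rw [h]
        simpa using this))]
      have : (Finset.univ.filter fun t : Fin s => t.val + v.val < s) =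
          (Finset.univ.filter fun t : Fin s => t.val < s - v.val) := by
        apply Finset.filter_congr
        intro t _
        constructor <;> intro h <;> omega
      rw [this, card_filter_val_lt s (s - v.val) (by omega)]
    calc Fintype.card {x : ZMod p // ∀ t : Fin s, t.val + v.val < s → x + i ≠ u t}
        = Fintype.card {x : ZMod p // x ∉ ((Finset.univ.filter
            fun t : Fin s => t.val + v.val < s).image fun t => u t - i)} :=
          Fintype.card_congr (Equiv.subtypeEquivRight hBdef)
      _ = p - (s - v.val) := by
          rw [Fintype.card_subtype_compl, ZMod.card, Fintype.card_coe, hBcard]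
  have hprodeq : ∏ v : Fin s, (p - (s - v.val)) = ∏ k ∈ Finset.Icc 1 s, (p - k) := by
    rw [Fin.prod_univ_eq_prod_range (fun j => p - (s - j)) s]
    apply Finset.prod_nbij' (fun i => s - i) (fun k => s - k)
    · intro a ha
      simp only [Finset.mem_range] at ha
      simp only [Finset.mem_Icc]
      omega
    · intro a ha
      simp only [Finset.mem_Icc] at ha
      simp only [Finset.mem_range]
      omega
    · intro a ha
      simp only [Finset.mem_range] at ha
      omega
    · intro a ha
      simp only [Finset.mem_Icc] at ha
      omega
    · intro a ha
      rfl
  rw [hcard1] at hcard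
  have heq : ∑ i : ZMod p, Fintype.card {m' : Fin s → ZMod p // P i m'} =
      p * ∏ k ∈ Finset.Icc 1 s, (p - k) := by
    rw [Finset.sum_congr rfl (fun i _ => (hcard2 i).trans hprodeq)]
    rw [Finset.sum_const, Finset.card_univ, ZMod.card, smul_eq_mul]
  rw [heq] at hcard
  omega

end Counting

section TopValues

lemma strictMono_val_le' {p : ℕ} (g : Fin p → ℕ) (hg : StrictMono g) :
    ∀ kv (hk : kv < p), kv ≤ g ⟨kv, hk⟩ := by
  intro kv
  induction kv with
  | zero => intro _; exact Nat.zero_le _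
  | succ j ih =>
    intro hk
    have hj : j < p := by omega
    have h2 : g ⟨j, hj⟩ < g ⟨j + 1, hk⟩ := hg (by simp [Fin.lt_def])
    have := ih hj
    omega

lemma exists_top (p s : ℕ) (hs : s ≤ p) (F : Fin p → ℕ)
    (hF : Function.Injective F) :
    ∃ uu : Fin s → Fin p, Function.Injective uu ∧
      ∀ t : Fin s, p - 1 - t.val ≤ F (uu t) := by
  classical
  have hWcard : (Finset.univ.image F).card = p := by
    rw [Finset.card_image_of_injective _ hF, Finset.card_univ, Fintype.card_fin]
  have hex : ∃ G : Fin p → ℕ, StrictMono G ∧ ∀ k, ∃ y, F y = G k := by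
    refine ⟨fun k => (Finset.univ.image F).orderEmbOfFin hWcard k, ?_, ?_⟩
    · intro a b h
      exact ((Finset.univ.image F).orderEmbOfFin hWcard).strictMono h
    · intro k
      have := (Finset.univ.image F).orderEmbOfFin_mem hWcard k
      rw [Finset.mem_image] at this
      obtain ⟨y, _, hy⟩ := this
      exact ⟨y, hy⟩
  obtain ⟨G, hGmono, hGmem⟩ := hex
  have hGk : ∀ kv (hk : kv < p), kv ≤ G ⟨kv, hk⟩ := strictMono_val_le' G hGmono
  choose y hy using hGmem
  refine ⟨fun t => y ⟨p - 1 - t.val, by omega⟩, ?_, ?_⟩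
  · intro t1 t2 h
    have h1 := hy ⟨p - 1 - t1.val, by omega⟩
    have h2 := hy ⟨p - 1 - t2.val, by omega⟩
    simp only at h
    rw [h] at h1
    have hGeq : G ⟨p - 1 - t1.val, by omega⟩ = G ⟨p - 1 - t2.val, by omega⟩ :=
      h1.symm.trans h2
    have := congrArg Fin.val (hGmono.injective hGeq)
    simp only [Fin.val_mk] at this
    have ht1 := t1.isLt
    have ht2 := t2.isLt
    ext
    omega
  · intro t
    rw [hy ⟨p - 1 - t.val, by omega⟩]
    exact hGk (p - 1 - t.val) (by omega)

end TopValues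

section PermExtend

lemma exists_perm_extend {α β : Type*} [Fintype α] [DecidableEq α] [Fintype β] [DecidableEq β]
    (φ ψ : β → α) (hφ : Function.Injective φ) (hψ : Function.Injective ψ) :
    ∃ f : Equiv.Perm α, ∀ b, f (φ b) = ψ b := by
  classical
  have hc : Fintype.card ((Set.range φ)ᶜ : Set α) = Fintype.card ((Set.range ψ)ᶜ : Set α) := by
    rw [Fintype.card_compl_set, Fintype.card_compl_set,
      Set.card_range_of_injective hφ, Set.card_range_of_injective hψ]
  have e : ((Set.range φ)ᶜ : Set α) ≃ ((Set.range ψ)ᶜ : Set α) := Fintype.equivOfCardEq hc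
  refine ⟨(Equiv.Set.sumCompl (Set.range φ)).symm.trans
    (((((Equiv.ofInjective φ hφ).symm.trans (Equiv.ofInjective ψ hψ))).sumCongr e).trans
      (Equiv.Set.sumCompl (Set.range ψ))), ?_⟩
  intro b
  simp only [Equiv.trans_apply]
  rw [Equiv.Set.sumCompl_symm_apply_of_mem (Set.mem_range_self b)]
  simp only [Equiv.sumCongr_apply, Sum.map_inl, Equiv.Set.sumCompl_apply_inl]
  show (((Equiv.ofInjective ψ hψ) ((Equiv.ofInjective φ hφ).symm
    ⟨φ b, Set.mem_range_self b⟩)) : α) = ψ b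
  have h0 : (⟨φ b, Set.mem_range_self b⟩ : (Set.range φ : Set α)) = ⟨φ b, ⟨b, rfl⟩⟩ := rfl
  rw [h0, Equiv.ofInjective_symm_apply]
  simp

end PermExtend

section GpqStruct

abbrev laList (p q : ℕ) : List (Fin (p + q)) :=
  (List.finRange p).map (Fin.castLE (Nat.le_add_right p q))

abbrev aPerm (p q : ℕ) : Perm (Fin (p + q)) := (laList p q).formPerm

abbrev bPerm (p q : ℕ) : Perm (Fin (p + q)) :=
  ((List.finRange q).map (Fin.natAdd p)).formPerm

variable (p q : ℕ)

lemma la_length : (laList p q).length = p := by simp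

lemma la_nodup : (laList p q).Nodup :=
  (List.nodup_finRange p).map (Fin.castLE_injective _)

lemma la_getElem (k : ℕ) (hk : k < p) :
    (laList p q)[k]'(by simpa using hk) = ⟨k, by omega⟩ := by
  ext
  simp [List.getElem_map, List.getElem_finRange]

lemma aPerm_apply_block (x : Fin (p + q)) (hx : x.val < p) :
    (aPerm p q x).val = (x.val + 1) % p := by
  have hlen := la_length p q
  have hx2 : x.val < (laList p q).length := by omega
  have hx' : x = (laList p q)[x.val]'hx2 := by rw [la_getElem p q x.val hx]
  have h3 : (x.val + 1) % (laList p q).length < (laList p q).length :=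
    Nat.mod_lt _ (by omega)
  conv_lhs => rw [hx', List.formPerm_apply_getElem _ (la_nodup p q) x.val hx2]
  rw [la_getElem p q ((x.val + 1) % (laList p q).length) (by simpa [hlen] using h3)]
  simp [hlen]

lemma aPerm_pow_block_lt (hp : 0 < p) (i : ℕ) :
    ∀ x : Fin (p + q), x.val < p → ((aPerm p q ^ i) x).val < p := by
  induction i with
  | zero => intro x hx; simpa
  | succ j ih =>
    intro x hx
    rw [pow_succ, Equiv.Perm.mul_apply]
    refine ih _ ?_
    rw [aPerm_apply_block p q x hx]
    exact Nat.mod_lt _ hp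

lemma bPerm_apply_block (x : Fin (p + q)) (hx : x.val < p) : bPerm p q x = x := by
  apply List.formPerm_apply_of_notMem
  simp only [List.mem_map, List.mem_finRange, true_and, not_exists]
  intro y h
  have := congrArg Fin.val h
  simp [Fin.natAdd] at this
  omega

lemma gpq_mem_struct (hp : 0 < p) (g : Perm (Fin (p + q)))
    (hg : g ∈ Subgroup.closure {aPerm p q, bPerm p q}) :
    ∃ i : ℕ, ∀ x : Fin (p + q), x.val < p → g x = (aPerm p q ^ i) x := by
  set S : Subgroup (Perm (Fin (p + q))) :=
    { carrier := {g | ∃ i : ℕ, ∀ x : Fin (p + q), x.val < p → g x = (aPerm p q ^ i) x}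
      one_mem' := ⟨0, fun x _ => rfl⟩
      mul_mem' := by
        rintro g1 g2 ⟨i1, h1⟩ ⟨i2, h2⟩
        refine ⟨i1 + i2, fun x hx => ?_⟩
        have hlt : ((aPerm p q ^ i2) x).val < p := aPerm_pow_block_lt p q hp i2 x hx
        rw [Equiv.Perm.mul_apply, h2 x hx, h1 _ hlt, pow_add, Equiv.Perm.mul_apply]
      inv_mem' := by
        rintro g ⟨i, h⟩
        set oc := orderOf (aPerm p q) with hoc
        have hoc1 : 1 ≤ oc := orderOf_pos _
        have hpow1 : aPerm p q ^ (i * oc) = 1 := by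
          rw [mul_comm, pow_mul, pow_orderOf_eq_one, one_pow]
        refine ⟨i * (oc - 1), fun x hx => ?_⟩
        have hz : ((aPerm p q ^ (i * (oc - 1))) x).val < p :=
          aPerm_pow_block_lt p q hp _ x hx
        have hgz : g ((aPerm p q ^ (i * (oc - 1))) x) = x := by
          rw [h _ hz, ← Equiv.Perm.mul_apply, ← pow_add]
          have heq : i + i * (oc - 1) = i * oc := by
            obtain ⟨k, hk⟩ : ∃ k, oc = k + 1 := ⟨oc - 1, by omega⟩
            rw [hk]
            simp only [Nat.add_sub_cancel]
            ring
          rw [heq, hpow1, Equiv.Perm.one_apply]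
        calc g⁻¹ x = g⁻¹ (g ((aPerm p q ^ (i * (oc - 1))) x)) := by rw [hgz]
          _ = (aPerm p q ^ (i * (oc - 1))) x := Equiv.symm_apply_apply _ _ } with hS
  have hsub : Subgroup.closure {aPerm p q, bPerm p q} ≤ S := by
    rw [Subgroup.closure_le]
    rintro g' (rfl | rfl)
    · exact ⟨1, fun x _ => by rw [pow_one]⟩
    · exact ⟨0, fun x hx => by rw [pow_zero]; exact bPerm_apply_block p q x hx⟩
  exact hsub hg

noncomputable def embZ [NeZero p] (z : ZMod p) : Fin (p + q) :=
  ⟨z.val, by have := ZMod.val_lt z; omega⟩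

lemma embZ_injective [NeZero p] : Function.Injective (embZ p q) := by
  intro z1 z2 h
  have := congrArg Fin.val h
  simp only [embZ] at this
  exact ZMod.val_injective p this

lemma embZ_step [NeZero p] (hp : 2 ≤ p) (z : ZMod p) :
    aPerm p q (embZ p q z) = embZ p q (z + 1) := by
  apply Fin.ext
  rw [aPerm_apply_block p q _ (by simpa [embZ] using ZMod.val_lt z)]
  haveI : Fact (1 < p) := ⟨hp⟩
  show (z.val + 1) % p = (z + 1).val
  rw [ZMod.val_add, ZMod.val_one]

lemma embZ_pow [NeZero p] (hp : 2 ≤ p) (i : ℕ) (z : ZMod p) :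
    (aPerm p q ^ i) (embZ p q z) = embZ p q (z + i) := by
  induction i with
  | zero => simp
  | succ j ih =>
    rw [pow_succ', Equiv.Perm.mul_apply, ih, embZ_step p q hp]
    congr 1
    push_cast
    ring

end GpqStruct

/-- For all positive integers `p ≥ q`,
`L_min(G_{p,q}) ≥ p − ⌈√(2p·ln(p) + 2p)⌉`. -/
theorem stmt_9 (p q : ℕ) (hq : 1 ≤ q) (hpq : q ≤ p) :
    (p : ℤ) - ⌈Real.sqrt (2 * (p : ℝ) * Real.log (p : ℝ) + 2 * (p : ℝ))⌉ ≤
      (Lmin (Gpq p q : Set (Perm (Fin (p + q)))) : ℤ) := by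
  have hp1 : 1 ≤ p := le_trans hq hpq
  set X : ℝ := 2 * (p : ℝ) * Real.log (p : ℝ) + 2 * (p : ℝ) with hX
  by_cases hbig : (p : ℤ) ≤ ⌈Real.sqrt X⌉
  · have h0 : (0 : ℤ) ≤ (Lmin (Gpq p q : Set (Perm (Fin (p + q)))) : ℤ) := Int.ofNat_nonneg _
    omega
  · push_neg at hbig
    have hlog : 0 ≤ Real.log p := Real.log_nonneg (by exact_mod_cast hp1)
    have hXnn : 0 ≤ X := by
      rw [hX]
      have hp0 : (0:ℝ) ≤ (p:ℝ) := by positivity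
      nlinarith
    have hs0nn : 0 ≤ ⌈Real.sqrt X⌉ := Int.ceil_nonneg (Real.sqrt_nonneg X)
    set s : ℕ := (⌈Real.sqrt X⌉).toNat with hsdef
    have hs0s : (⌈Real.sqrt X⌉ : ℤ) = (s : ℤ) := (Int.toNat_of_nonneg hs0nn).symm
    have hs_lt : s < p := by
      have : (s : ℤ) < (p : ℤ) := hs0s ▸ hbig
      exact_mod_cast this
    have hsqrt : Real.sqrt X ≤ (s : ℝ) := by
      have h := Int.le_ceil (Real.sqrt X)
      rw [hs0s] at h
      exact_mod_cast h
    have hge : X ≤ (s : ℝ) ^ 2 := by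
      nlinarith [Real.sq_sqrt hXnn, Real.sqrt_nonneg X]
    have hs1 : 1 ≤ s := by
      by_contra hcon
      push_neg at hcon
      interval_cases s
      · simp only [Nat.cast_zero] at hge
        have hp0 : (1:ℝ) ≤ (p:ℝ) := by exact_mod_cast hp1
        nlinarith
    have hp2 : 2 ≤ p := by omega
    haveI : NeZero p := ⟨by omega⟩
    suffices h : p - s ≤ Lmin (Gpq p q : Set (Perm (Fin (p + q)))) by
      have h2 : ((p - s : ℕ) : ℤ) ≤ (Lmin (Gpq p q : Set (Perm (Fin (p + q)))) : ℤ) := by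
        exact_mod_cast h
      rw [Nat.cast_sub (le_of_lt hs_lt)] at h2
      omega
    rw [Lmin]
    apply le_csInf ⟨_, Set.mem_range_self 1⟩
    rintro r ⟨π, rfl⟩
    -- the counting bound
    have hcnt := count_ineq_nat p s hp2 hs_lt hge
    -- top values
    set F : Fin p → ℕ := fun y => (π (⟨y.val, by omega⟩ : Fin (p + q))).val with hF
    have hFinj : Function.Injective F := by
      intro y1 y2 h
      have h2 : π (⟨y1.val, by omega⟩ : Fin (p + q)) = π (⟨y2.val, by omega⟩ : Fin (p + q)) :=
        Fin.ext h
      have h3 := π.injective h2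
      have h4 := congrArg Fin.val h3
      simp only [Fin.val_mk] at h4
      exact Fin.ext h4
    obtain ⟨uu, huuinj, huu⟩ := exists_top p s (le_of_lt hs_lt) F hFinj
    set u : Fin s → ZMod p := fun t => ((uu t).val : ZMod p) with hu
    have huinj : Function.Injective u := by
      intro t1 t2 h
      have h1 := congrArg ZMod.val h
      simp only [hu] at h1
      rw [ZMod.val_natCast_of_lt (uu t1).isLt, ZMod.val_natCast_of_lt (uu t2).isLt] at h1
      exact huuinj (Fin.ext h1)
    obtain ⟨m, hm⟩ := exists_covering p s hp2 hs1 (le_of_lt hs_lt) hcnt u huinj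
    -- collision resolution
    classical
    set mv : Fin s → Fin s :=
      fun v => (Finset.univ.filter fun v' => m v' = m v).min' ⟨v, by simp⟩ with hmv
    have hmv1 : ∀ v, m (mv v) = m v := fun v =>
      (Finset.mem_filter.mp ((Finset.univ.filter fun v' => m v' = m v).min'_mem
        ⟨v, by simp⟩)).2
    have hmv2 : ∀ v, (mv v).val ≤ v.val := by
      intro v
      have h := Finset.min'_le (Finset.univ.filter fun v' => m v' = m v) v (by simp)
      exact h
    have hmv3 : ∀ v v', m v = m v' → mv v = mv v' := by
      intro v v' h
      show Finset.min' _ _ = Finset.min' _ _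
      have : (Finset.univ.filter fun v'' => m v'' = m v) =
          (Finset.univ.filter fun v'' => m v'' = m v') := by
        apply Finset.filter_congr
        intro v'' _
        rw [h]
      congr 1
    have hmv4 : ∀ v, mv (mv v) = mv v := fun v => hmv3 _ _ (hmv1 v)
    -- construct the permutation f
    have hφinj : Function.Injective
        (fun v : {v : Fin s // mv v = v} => π (embZ p q (m v.val))) := by
      intro v1 v2 h
      have h1 := embZ_injective p q (π.injective h)
      have h2 := hmv3 _ _ h1
      rw [v1.prop, v2.prop] at h2
      exact Subtype.ext h2
    have hψinj : Function.Injective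
        (fun v : {v : Fin s // mv v = v} =>
          (⟨v.val.val, by have := v.val.isLt; omega⟩ : Fin (p + q))) := by
      intro v1 v2 h
      have := congrArg Fin.val h
      simp only [Fin.val_mk] at this
      exact Subtype.ext (Fin.ext this)
    obtain ⟨f, hf⟩ := exists_perm_extend _ _ hφinj hψinj
    -- lower bound on the distance from f to the code
    have hdist : p - s ≤ distToCode f (conjCode π (Gpq p q : Set (Perm (Fin (p + q))))) := by
      rw [distToCode]
      apply le_csInf
      · exact ⟨_, Set.mem_image_of_mem _
          (Set.mem_image_of_mem _ (SetLike.mem_coe.mpr (one_mem (Gpq p q))))⟩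
      rintro r' ⟨g', ⟨g, hg, rfl⟩, rfl⟩
      obtain ⟨i, hi⟩ := gpq_mem_struct p q (by omega) g hg
      obtain ⟨v, t, htv, heqc⟩ := hm (i : ZMod p)
      set x : Fin (p + q) := π (embZ p q (m v)) with hxd
      -- value of f at x
      have hfx : (f x).val = (mv v).val := by
        have hx2 : x = π (embZ p q (m (⟨mv v, hmv4 v⟩ : {v : Fin s // mv v = v}).val)) := by
          rw [hxd]
          congr 2
          exact (hmv1 v).symm
        rw [hx2, hf ⟨mv v, hmv4 v⟩]
      -- value of the codeword at x
      have hgx : p - 1 - t.val ≤ ((π * g * π⁻¹ : Perm (Fin (p + q))) x).val := by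
        have h1 : (π * g * π⁻¹ : Perm (Fin (p + q))) x = π (g (embZ p q (m v))) := by
          simp only [hxd, Equiv.Perm.mul_apply]
          exact congrArg (fun y => π (g y)) (Equiv.symm_apply_apply π _)
        have h2 : g (embZ p q (m v)) = (aPerm p q ^ i) (embZ p q (m v)) :=
          hi _ (by simpa [embZ] using ZMod.val_lt (m v))
        have h3 : (aPerm p q ^ i) (embZ p q (m v)) = embZ p q (u t) := by
          rw [embZ_pow p q hp2 i (m v), heqc]
        have h4 : embZ p q (u t) = (⟨(uu t).val, by have := (uu t).isLt; omega⟩ : Fin (p + q)) := by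
          apply Fin.ext
          show (u t).val = (uu t).val
          rw [hu]
          exact ZMod.val_natCast_of_lt (uu t).isLt
        rw [h1, h2, h3, h4]
        exact huu t
      have hsup := Finset.le_sup (f := fun i : Fin (p + q) =>
        (((f i).val : ℤ) - (((π * g * π⁻¹ : Perm (Fin (p + q))) i).val : ℤ)).natAbs)
        (Finset.mem_univ x)
      rw [linfDist]
      refine le_trans ?_ hsup
      have hbeta : ((fun i : Fin (p + q) =>
          (((f i).val : ℤ) - (((π * g * π⁻¹ : Perm (Fin (p + q))) i).val : ℤ)).natAbs) x) =
          (((f x).val : ℤ) - (((π * g * π⁻¹ : Perm (Fin (p + q))) x).val : ℤ)).natAbs := rfl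
      have hvs := v.isLt
      have hts := t.isLt
      have hmvv := hmv2 v
      omega
    exact le_trans hdist (le_csSup (Set.Finite.bddAbove (Set.finite_range _))
      (Set.mem_range_self f))
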